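/- Let n be odd, let p be a permutation of {1,...,n}, and let q be obtained from p by inserting n+1 into a T2-gap of p (a position i with p_i < p_{i+1}, both p_i and p_{i+1} odd). Then C(q) = C(p), D(q) = D(p) + 1, A(q) = A(p), B(q) = B(p), and E(q) = E(p). -/

import Mathlib

open List
open scoped Classical

/-- adjacent pairs of a list -/
def pairs (l : List ℕ) : List (ℕ × ℕ) := l.zip l.tail

/-- `l` is a permutation (as a word) of `{1, ..., n}` -/
def IsPermOf (n : ℕ) (l : List ℕ) : Prop := l.Perm (List.range' 1 n)

def T1 (l : List ℕ) : ℕ := (pairs l).countP (fun q => decide (q.2 < q.1 ∧ Odd q.1 ∧ Even q.2))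
def T2 (l : List ℕ) : ℕ := (pairs l).countP (fun q => decide (q.1 < q.2 ∧ Odd q.1 ∧ Odd q.2))
def T3 (l : List ℕ) : ℕ := (pairs l).countP (fun q => decide (q.2 < q.1 ∧ Odd q.1 ∧ Odd q.2))
def S10 (l : List ℕ) : ℕ := (pairs l).countP (fun q => decide (q.2 < q.1 ∧ Odd q.1))
def S12 (l : List ℕ) : ℕ := (pairs l).countP (fun q => decide (Odd q.1 ∧ Odd q.2))

/-- largest `i` such that the values `1, ..., i` appear in left-to-right order in `l` -/
def S17 (l : List ℕ) : ℕ :=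
  Nat.findGreatest (fun i => ∀ j < i, 1 ≤ j → l.idxOf j < l.idxOf (j + 1)) l.length

def statA (l : List ℕ) : ℕ :=
  (pairs l).countP (fun q => decide (Even q.1 ∧ Even q.2)) + (if Even (l.headD 1) then 1 else 0)
def statB (l : List ℕ) : ℕ :=
  (pairs l).countP (fun q => decide (q.2 < q.1 ∧ Odd q.1)) + (if Odd (l.getLastD 0) then 1 else 0)
def statC (l : List ℕ) : ℕ :=
  (pairs l).countP (fun q => decide ((Even q.1 ∧ Odd q.2) ∨ (q.1 < q.2 ∧ Odd q.1 ∧ Odd q.2))) +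
    (if Odd (l.headD 0) then 1 else 0)
def statD (l : List ℕ) : ℕ :=
  (pairs l).countP (fun q => decide (q.1 < q.2 ∧ Odd q.1 ∧ Even q.2))
def statE (l : List ℕ) : ℕ := if Even (l.getLastD 1) then 1 else 0

/-- the `i`-th entry of `l` (0-indexed), default 0 -/
def entry (l : List ℕ) (i : ℕ) : ℕ := l.getD i 0

/-- inserting `m` at gap `j` of `l` -/
def insertGap (l : List ℕ) (j : ℕ) (m : ℕ) : List ℕ := l.take j ++ m :: l.drop j

def IsAGap (l : List ℕ) (j : ℕ) : Prop :=
  (j = 0 ∧ Even (l.headD 1)) ∨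
  (1 ≤ j ∧ j < l.length ∧ Even (entry l (j - 1)) ∧ Even (entry l j))

def IsBGap (l : List ℕ) (j : ℕ) : Prop :=
  (1 ≤ j ∧ j < l.length ∧ entry l j < entry l (j - 1) ∧ Odd (entry l (j - 1))) ∨
  (j = l.length ∧ Odd (l.getLastD 0))

def IsCGap (l : List ℕ) (j : ℕ) : Prop :=
  (j = 0 ∧ Odd (l.headD 0)) ∨
  (1 ≤ j ∧ j < l.length ∧ ((Even (entry l (j - 1)) ∧ Odd (entry l j)) ∨
    (entry l (j - 1) < entry l j ∧ Odd (entry l (j - 1)) ∧ Odd (entry l j))))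

def IsDGap (l : List ℕ) (j : ℕ) : Prop :=
  1 ≤ j ∧ j < l.length ∧ entry l (j - 1) < entry l j ∧ Odd (entry l (j - 1)) ∧ Even (entry l j)

def IsEGap (l : List ℕ) (j : ℕ) : Prop := j = l.length ∧ Even (l.getLastD 1)

/-- the word `p_1 p_2 ... p_n` (values in `{1,...,n}`) of a permutation of `Fin n` -/
def word (n : ℕ) (p : Equiv.Perm (Fin n)) : List ℕ := List.ofFn (fun i => (p i : ℕ) + 1)


lemma pairs_append_cons (xs : List ℕ) (a : ℕ) (ys : List ℕ) :
    pairs (xs ++ a :: ys) = pairs (xs ++ [a]) ++ pairs (a :: ys) := by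
  induction xs with
  | nil => simp [pairs]
  | cons x xs ih =>
    cases xs with
    | nil => simp [pairs]
    | cons y rest =>
      have h1 : pairs (x :: y :: (rest ++ a :: ys)) = (x, y) :: pairs (y :: (rest ++ a :: ys)) := rfl
      have h2 : pairs (x :: y :: (rest ++ [a])) = (x, y) :: pairs (y :: (rest ++ [a])) := rfl
      simp only [List.cons_append] at ih ⊢
      rw [h1, h2, ih]
      simp

lemma headD_append_cons (A : List ℕ) (x : ℕ) (s t : List ℕ) (d : ℕ) :
    (A ++ x :: s).headD d = (A ++ x :: t).headD d := by cases A <;> simp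

lemma getLastD_append_cons (A : List ℕ) (x : ℕ) (t : List ℕ) (d : ℕ) :
    (A ++ x :: t).getLastD d = (x :: t).getLastD d := by
  induction A generalizing d with
  | nil => rfl
  | cons y ys ih =>
    rw [List.cons_append, List.getLastD_cons, ih, List.getLastD_cons, List.getLastD_cons]

theorem stmt10 (n : ℕ) (hn : Odd n) (l : List ℕ) (hl : IsPermOf n l) (j : ℕ)
    (hj1 : 1 ≤ j) (hj2 : j < n)
    (hgap : entry l (j - 1) < entry l j ∧ Odd (entry l (j - 1)) ∧ Odd (entry l j))
    (q : List ℕ) (hq : q = insertGap l j (n + 1)) :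
    statC q = statC l ∧ statD q = statD l + 1 ∧ statA q = statA l ∧
    statB q = statB l ∧ statE q = statE l := by
  have hlen : l.length = n := by
    have := hl.length_eq; simpa using this
  have h1 : j - 1 < l.length := by omega
  have h2 : j < l.length := by omega
  set a := entry l (j - 1) with ha_def
  set b := entry l j with hb_def
  set m := n + 1 with hm_def
  obtain ⟨hab, ha, hb⟩ := hgap
  have hm : Even m := Odd.add_one hn
  have hea : a = l[j-1] := by rw [ha_def, entry, List.getD_eq_getElem l 0 h1]
  have heb : b = l[j] := by rw [hb_def, entry, List.getD_eq_getElem l 0 h2]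
  have hdrop1 : l.drop (j - 1) = a :: l.drop j := by
    have hj : j - 1 + 1 = j := by omega
    rw [List.drop_eq_getElem_cons h1, ← hea, hj]
  have hdrop2 : l.drop j = b :: l.drop (j + 1) := by
    rw [List.drop_eq_getElem_cons h2, ← heb]
  have htake : l.take j = l.take (j - 1) ++ [a] := by
    have : j = (j - 1) + 1 := by omega
    rw [this, List.take_succ, List.getElem?_eq_getElem h1, ← hea]
    rfl
  set A := l.take (j - 1) with hA
  set B := l.drop (j + 1) with hB
  have hl_eq : l = A ++ a :: b :: B := by
    conv_lhs => rw [← List.take_append_drop (j - 1) l]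
    rw [hdrop1, hdrop2]
  have hq_eq : q = A ++ a :: m :: b :: B := by
    rw [hq, insertGap, htake, hdrop2]
    simp
  have ham : a < m := by
    have hmem : a ∈ l := by rw [hl_eq]; simp
    have := hl.mem_iff.mp hmem
    rw [List.mem_range'_1] at this
    omega
  have hpl : pairs l = pairs (A ++ [a]) ++ (a, b) :: pairs (b :: B) := by
    rw [hl_eq, pairs_append_cons]
    rfl
  have hpq : pairs q = pairs (A ++ [a]) ++ (a, m) :: (m, b) :: pairs (b :: B) := by
    rw [hq_eq, pairs_append_cons]
    rfl
  have hnoa : ¬ Even a := (Nat.not_even_iff_odd).mpr ha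
  have hnob : ¬ Even b := (Nat.not_even_iff_odd).mpr hb
  have hnom : ¬ Odd m := (Nat.not_odd_iff_even).mpr hm
  have hhead : ∀ d, q.headD d = l.headD d := by
    intro d
    rw [hl_eq, hq_eq]
    exact headD_append_cons A a _ _ d
  have hlast : ∀ d, q.getLastD d = l.getLastD d := by
    intro d
    rw [hl_eq, hq_eq, getLastD_append_cons, getLastD_append_cons]
    simp only [List.getLastD_cons]
  refine ⟨?_, ?_, ?_, ?_, ?_⟩
  · rw [statC, statC, hpl, hpq, hhead]
    simp only [List.countP_append, List.countP_cons]
    have d1 : decide ((Even a ∧ Odd m) ∨ (a < m ∧ Odd a ∧ Odd m)) = false := by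
      simp [hnoa, hnom]
    have d2 : decide ((Even m ∧ Odd b) ∨ (m < b ∧ Odd m ∧ Odd b)) = true := by
      simp [hm, hb]
    have d3 : decide ((Even a ∧ Odd b) ∨ (a < b ∧ Odd a ∧ Odd b)) = true := by
      simp [hab, ha, hb]
    simp only [d1, d2, d3]
    simp only [if_true, if_false, Bool.false_eq_true, Bool.true_eq_false, if_pos, reduceIte]
    try ring
  · rw [statD, statD, hpl, hpq]
    simp only [List.countP_append, List.countP_cons]
    have d1 : decide (a < m ∧ Odd a ∧ Even m) = true := by simp [ham, ha, hm]
    have d2 : decide (m < b ∧ Odd m ∧ Even b) = false := by simp [hnom]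
    have d3 : decide (a < b ∧ Odd a ∧ Even b) = false := by simp [hnob]
    simp only [d1, d2, d3]
    simp only [if_true, if_false, Bool.false_eq_true, Bool.true_eq_false, if_pos, reduceIte]
    try ring
  · rw [statA, statA, hpl, hpq, hhead]
    simp only [List.countP_append, List.countP_cons]
    have d1 : decide (Even a ∧ Even m) = false := by simp [hnoa]
    have d2 : decide (Even m ∧ Even b) = false := by simp [hnob]
    have d3 : decide (Even a ∧ Even b) = false := by simp [hnoa]
    simp only [d1, d2, d3]
    simp only [if_true, if_false, Bool.false_eq_true, Bool.true_eq_false, if_pos, reduceIte]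
    try ring
  · rw [statB, statB, hpl, hpq, hlast]
    simp only [List.countP_append, List.countP_cons]
    have d1 : decide (m < a ∧ Odd a) = false := by simp; omega
    have d2 : decide (b < m ∧ Odd m) = false := by simp [hnom]
    have d3 : decide (b < a ∧ Odd a) = false := by simp; omega
    simp only [d1, d2, d3]
    simp only [if_true, if_false, Bool.false_eq_true, Bool.true_eq_false, if_pos, reduceIte]
    try ring
  · rw [statE, statE, hlast]
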